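/- For every integer $d \ge 1$, the identity $\sum_{k+m+r=d,\ k,m,r\ge 0} (-1)^r \dfrac{v^{\binom{r+1}{2} - 2(k-1)m}}{[r]!\,[2k]^{!!}\,[2m]^{!!}} = 0$ holds in $\mathbb{Q}(v)$. -/

import Mathlib

noncomputable section

abbrev K : Type := RatFunc ℚ

/-- The indeterminate `v` in `ℚ(v)`. -/
def v : K := RatFunc.X

/-- Quantum integer `[m] = (v^m - v^{-m})/(v - v^{-1})`. -/
def qint (m : ℤ) : K := (v ^ m - v ^ (-m)) / (v - v⁻¹)

/-- Quantum factorial `[r]! = ∏_{i=1}^r [i]`. -/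
def qfact (r : ℕ) : K := ∏ i ∈ Finset.range r, qint ((i : ℤ) + 1)

/-- Quantum double factorial `[2r]!! = ∏_{i=1}^r [2i]`. -/
def qdfact (r : ℕ) : K := ∏ i ∈ Finset.range r, qint (2 * ((i : ℤ) + 1))

/-- Balanced Gaussian binomial coefficient `[m][m-1]⋯[m-r+1]/[r]!`. -/
def qbinom (m : ℤ) (r : ℕ) : K := (∏ i ∈ Finset.range r, qint (m - (i : ℤ))) / qfact r

/-- Gaussian binomial with integer lower index, vanishing for negative lower index. -/
def qbinomZ (m r : ℤ) : K := if 0 ≤ r then qbinom m r.toNat else 0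

lemma v_ne_zero : v ≠ 0 := RatFunc.X_ne_zero
lemma v_pow_ne_one (n : ℕ) (hn : n ≠ 0) : v ^ n ≠ 1 := by
  intro h
  have h2 : (algebraMap (Polynomial ℚ) K) (Polynomial.X ^ n) = algebraMap (Polynomial ℚ) K 1 := by
    simpa [v, RatFunc.algebraMap_X] using h
  have h3 := RatFunc.algebraMap_injective ℚ h2
  have := congrArg Polynomial.natDegree h3
  simp [Polynomial.natDegree_X_pow] at this
  exact hn this
lemma v_zpow_ne_one (n : ℤ) (hn : n ≠ 0) : v ^ n ≠ 1 := by
  rcases n.lt_or_lt_of_ne hn with h | h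
  · intro he
    have : v ^ (-n) = 1 := by
      have := congrArg (· ⁻¹) he
      simpa [← zpow_neg] using this
    rw [show (-n) = ((-n).toNat : ℤ) by omega, zpow_natCast] at this
    exact v_pow_ne_one _ (by omega) this
  · intro he
    rw [show n = (n.toNat : ℤ) by omega, zpow_natCast] at he
    exact v_pow_ne_one _ (by omega) he

lemma delta_ne_zero : v - v⁻¹ ≠ 0 := by
  intro h
  have hv : v = v⁻¹ := by linear_combination h
  have h2 : v ^ (2:ℤ) = 1 := by
    have := congrArg (· * v) hv
    simp only [inv_mul_cancel₀ v_ne_zero] at this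
    rw [show (2:ℤ) = 1 + 1 by norm_num, zpow_add₀ v_ne_zero]
    simpa using this
  exact v_zpow_ne_one 2 (by norm_num) h2


lemma qint_num_ne_zero (m : ℤ) (hm : m ≠ 0) : v ^ m - v ^ (-m) ≠ 0 := by
  intro h
  have hh : v ^ m = v ^ (-m) := by linear_combination h
  have h2 : v ^ (2*m) = 1 := by
    have := congrArg (· * v ^ m) hh
    simp only [← zpow_add₀ v_ne_zero] at this
    simpa [two_mul] using this
  exact v_zpow_ne_one _ (by omega) h2

lemma qint_ne_zero (m : ℤ) (hm : m ≠ 0) : qint m ≠ 0 :=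
  div_ne_zero (qint_num_ne_zero m hm) delta_ne_zero

lemma qint_mul_delta (m : ℤ) : qint m * (v - v⁻¹) = v ^ m - v ^ (-m) :=
  div_mul_cancel₀ _ delta_ne_zero

lemma zp (a b : ℤ) : v ^ (a + b) = v ^ a * v ^ b := zpow_add₀ v_ne_zero a b

lemma qint_pascal (a b : ℤ) : qint (a + b) = v ^ b * qint a + v ^ (-a) * qint b := by
  apply mul_right_cancel₀ delta_ne_zero
  rw [add_mul, mul_assoc, mul_assoc, qint_mul_delta, qint_mul_delta, qint_mul_delta]
  simp only [neg_add, zp]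
  ring

lemma qint_zero : qint 0 = 0 := by simp [qint]
lemma qint_one : qint 1 = 1 := by
  simp only [qint]
  rw [div_eq_one_iff_eq delta_ne_zero]
  norm_num [zpow_one]

lemma qfact_succ (r : ℕ) : qfact (r+1) = qfact r * qint ((r:ℤ)+1) := Finset.prod_range_succ _ _

lemma qfact_zero : qfact 0 = 1 := rfl

lemma qfact_ne_zero (r : ℕ) : qfact r ≠ 0 := by
  induction r with
  | zero => simp [qfact_zero]
  | succ n ih => rw [qfact_succ]; exact mul_ne_zero ih (qint_ne_zero _ (by omega))

def Xsum (d : ℕ) : K :=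
  ∑ r ∈ Finset.range (d+1), (-1:K)^r * v ^ ((r:ℤ) * ((d:ℤ)-1)) / (qfact r * qfact (d-r))

lemma Xsum_one : Xsum 1 = 0 := by
  simp [Xsum, Finset.sum_range_succ, qfact_zero, qfact_succ, qint_one]

lemma Xsum_rec (d : ℕ) (hd : 1 ≤ d) :
    qint d * Xsum d = (1 - v ^ (2*((d:ℤ)-1))) * Xsum (d-1) := by
  rw [Xsum, Finset.mul_sum]
  have key : ∀ r ∈ Finset.range (d+1),
      qint d * ((-1:K)^r * v ^ ((r:ℤ) * ((d:ℤ)-1)) / (qfact r * qfact (d-r)))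
      = ((-1:K)^r * v ^ ((r:ℤ) * ((d:ℤ)-1) + ((d:ℤ)-(r:ℤ))) * qint r / (qfact r * qfact (d-r)))
        + ((-1:K)^r * v ^ ((r:ℤ) * ((d:ℤ)-1) - (r:ℤ)) * qint ((d:ℤ)-(r:ℤ)) / (qfact r * qfact (d-r))) := by
    intro r hr
    have h := qint_pascal (r:ℤ) ((d:ℤ)-(r:ℤ))
    rw [show (r:ℤ) + ((d:ℤ)-(r:ℤ)) = (d:ℤ) by ring] at h
    rw [h, zp ((r:ℤ)*((d:ℤ)-1)) ((d:ℤ)-(r:ℤ)),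
      show (r:ℤ) * ((d:ℤ)-1) - (r:ℤ) = (r:ℤ)*((d:ℤ)-1) + (-(r:ℤ)) by ring,
      zp ((r:ℤ)*((d:ℤ)-1)) (-(r:ℤ))]
    ring
  rw [Finset.sum_congr rfl key, Finset.sum_add_distrib]
  have hP : ∑ r ∈ Finset.range (d+1),
      ((-1:K)^r * v ^ ((r:ℤ) * ((d:ℤ)-1) + ((d:ℤ)-(r:ℤ))) * qint r / (qfact r * qfact (d-r)))
      = -(v^(2*((d:ℤ)-1)) * Xsum (d-1)) := by
    rw [Finset.sum_range_succ']
    simp only [Nat.cast_zero, qint_zero, mul_zero, zero_mul, zero_div, mul_zero, add_zero]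
    rw [Xsum, Finset.mul_sum, ← Finset.sum_neg_distrib]
    rw [show (d-1)+1 = d by omega]
    apply Finset.sum_congr rfl
    intro r hr
    simp only [Finset.mem_range] at hr
    have h1 : d - (r+1) = (d-1) - r := by omega
    have h2 : qfact (r+1) = qfact r * qint ((r:ℤ)+1) := qfact_succ r
    have h3 : qint (((r:ℕ):ℤ)+1) ≠ 0 := qint_ne_zero _ (by omega)
    have hcast : ((d:ℤ)-1) = ((d-1:ℕ):ℤ) := by omega
    have hexp : ((r:ℤ)+1) * ((d:ℤ)-1) + ((d:ℤ)-((r:ℤ)+1))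
        = (r:ℤ) * (((d-1:ℕ):ℤ)-1) + 2*((d:ℤ)-1) := by push_cast [Nat.cast_sub hd]; ring
    push_cast
    rw [h1, h2, hexp, zp, pow_succ]
    rw [hcast]
    have h3' : qint (1+(r:ℤ)) ≠ 0 := by rw [add_comm]; exact h3
    field_simp [h3']
  have hQ : ∑ r ∈ Finset.range (d+1),
      ((-1:K)^r * v ^ ((r:ℤ) * ((d:ℤ)-1) - (r:ℤ)) * qint ((d:ℤ)-(r:ℤ)) / (qfact r * qfact (d-r)))
      = Xsum (d-1) := by
    rw [Finset.sum_range_succ]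
    simp only [sub_self, qint_zero, mul_zero, zero_div, add_zero]
    rw [Xsum, show (d-1)+1 = d by omega]
    apply Finset.sum_congr rfl
    intro r hr
    simp only [Finset.mem_range] at hr
    have h1 : d - r = (d - 1 - r) + 1 := by omega
    have h2 : qfact ((d-1-r)+1) = qfact (d-1-r) * qint (((d-1-r:ℕ):ℤ)+1) := qfact_succ _
    have h3 : (((d-1-r:ℕ):ℤ)+1) = (d:ℤ)-(r:ℤ) := by
      have : ((d-1-r:ℕ):ℤ) = (d:ℤ)-1-r := by omega
      omega
    have h4 : qint ((d:ℤ)-(r:ℤ)) ≠ 0 := qint_ne_zero _ (by omega)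
    have hexp : (r:ℤ) * ((d:ℤ)-1) - (r:ℤ) = (r:ℤ) * (((d-1:ℕ):ℤ)-1) := by
      push_cast [Nat.cast_sub hd]; ring
    rw [h1, h2, h3, hexp]
    rw [div_eq_div_iff (mul_ne_zero (qfact_ne_zero r) (mul_ne_zero (qfact_ne_zero _) h4))
      (mul_ne_zero (qfact_ne_zero r) (qfact_ne_zero _))]
    ring
  rw [hP, hQ]
  ring

lemma Xsum_eq_zero (d : ℕ) (hd : 1 ≤ d) : Xsum d = 0 := by
  induction d with
  | zero => omega
  | succ n ih =>
    rcases Nat.eq_zero_or_pos n with h | h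
    · subst h; exact Xsum_one
    · have hrec := Xsum_rec (n+1) (by omega)
      rw [Nat.add_sub_cancel, ih h, mul_zero] at hrec
      have hq : qint ((n+1:ℕ):ℤ) ≠ 0 := qint_ne_zero _ (by push_cast; omega)
      exact (mul_eq_zero.mp hrec).resolve_left hq

lemma qdfact_succ (r : ℕ) : qdfact (r+1) = qdfact r * qint (2*((r:ℤ)+1)) := Finset.prod_range_succ _ _
lemma qdfact_zero : qdfact 0 = 1 := rfl
lemma qdfact_ne_zero (r : ℕ) : qdfact r ≠ 0 := by
  induction r with
  | zero => simp [qdfact_zero]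
  | succ n ih => rw [qdfact_succ]; exact mul_ne_zero ih (qint_ne_zero _ (by omega))

lemma qint_double (m : ℤ) : qint (2*m) = qint m * (v ^ m + v ^ (-m)) := by
  apply mul_right_cancel₀ delta_ne_zero
  rw [mul_right_comm, qint_mul_delta, qint_mul_delta]
  rw [show 2*m = m + m by ring, show -(m+m) = -m + -m by ring, zp, zp]
  ring

def At (n k : ℕ) : K := v ^ (2*((n:ℤ)-(k:ℤ))*(1-(k:ℤ))) / (qdfact k * qdfact (n-k))
def A (n : ℕ) : K := ∑ k ∈ Finset.range (n+1), At n k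

lemma A_symm (N : ℕ) :
    ∑ k ∈ Finset.range (N+1), v ^ (-4*((N:ℤ)-(k:ℤ))) * At N k = v ^ (-2*(N:ℤ)) * A N := by
  rw [← Finset.sum_range_reflect, A, Finset.mul_sum]
  apply Finset.sum_congr rfl
  intro k hk
  simp only [Finset.mem_range] at hk
  have hk' : k ≤ N := by omega
  rw [show N + 1 - 1 - k = N - k by omega]
  rw [At, At, show N - (N-k) = k by omega]
  have c1 : ((N-k:ℕ):ℤ) = (N:ℤ)-k := by omega
  rw [c1]
  rw [mul_comm (qdfact (N-k)) (qdfact k), ← mul_div_assoc, ← mul_div_assoc, ← zp, ← zp]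
  congr 2
  ring

lemma A_rec (n : ℕ) (hn : 1 ≤ n) :
    qint (2*(n:ℤ)) * A n = (v^(2:ℤ) + v^(2-2*(n:ℤ))) * A (n-1) := by
  rw [A, Finset.mul_sum]
  have key : ∀ k ∈ Finset.range (n+1),
      qint (2*(n:ℤ)) * At n k
      = v^(2*(k:ℤ)) * qint (2*((n:ℤ)-(k:ℤ))) * At n k
        + v^(-(2*((n:ℤ)-(k:ℤ)))) * qint (2*(k:ℤ)) * At n k := by
    intro k hk
    have h := qint_pascal (2*((n:ℤ)-(k:ℤ))) (2*(k:ℤ))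
    rw [show 2*((n:ℤ)-(k:ℤ)) + 2*(k:ℤ) = 2*(n:ℤ) by ring] at h
    rw [h]; ring
  rw [Finset.sum_congr rfl key, Finset.sum_add_distrib]
  have h1 : ∑ k ∈ Finset.range (n+1), v^(2*(k:ℤ)) * qint (2*((n:ℤ)-(k:ℤ))) * At n k
      = v^(2:ℤ) * A (n-1) := by
    rw [Finset.sum_range_succ, sub_self, mul_zero, qint_zero, mul_zero, zero_mul, add_zero]
    rw [A, Finset.mul_sum, show (n-1)+1 = n by omega]
    apply Finset.sum_congr rfl
    intro k hk
    simp only [Finset.mem_range] at hk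
    rw [At, At, show n - k = (n-1-k)+1 by omega, qdfact_succ]
    have c1 : ((n-1-k:ℕ):ℤ)+1 = (n:ℤ)-(k:ℤ) := by omega
    have c2 : ((n-1:ℕ):ℤ) = (n:ℤ)-1 := by omega
    rw [c1, c2]
    have hq : qint (2*((n:ℤ)-(k:ℤ))) ≠ 0 := qint_ne_zero _ (by omega)
    rw [← mul_div_assoc, ← mul_div_assoc]
    rw [div_eq_div_iff (mul_ne_zero (qdfact_ne_zero k) (mul_ne_zero (qdfact_ne_zero _) hq))
      (mul_ne_zero (qdfact_ne_zero k) (qdfact_ne_zero _))]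
    have e1 : v^(2*(k:ℤ)) * v^(2*((n:ℤ)-(k:ℤ))*(1-(k:ℤ)))
        = v^((2:ℤ)) * v^(2*(((n:ℤ)-1)-(k:ℤ))*(1-(k:ℤ))) := by
      rw [← zp, ← zp]; congr 1; ring
    linear_combination (qint (2*((n:ℤ)-(k:ℤ))) * qdfact k * qdfact (n-1-k)) * e1
  have h2 : ∑ k ∈ Finset.range (n+1), v^(-(2*((n:ℤ)-(k:ℤ)))) * qint (2*(k:ℤ)) * At n k
      = v^(2-2*(n:ℤ)) * A (n-1) := by
    rw [Finset.sum_range_succ']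
    simp only [Nat.cast_zero, mul_zero, qint_zero, zero_mul, mul_zero, add_zero]
    have step : ∀ k ∈ Finset.range n,
        v^(-(2*((n:ℤ)-((k+1:ℕ):ℤ)))) * qint (2*((k+1:ℕ):ℤ)) * At n (k+1)
        = v ^ (-4*(((n-1:ℕ):ℤ)-(k:ℤ))) * At (n-1) k := by
      intro k hk
      simp only [Finset.mem_range] at hk
      rw [At, At, show n - (k+1) = (n-1)-k by omega, qdfact_succ]
      have c2 : ((n-1:ℕ):ℤ) = (n:ℤ)-1 := by omega
      push_cast
      rw [c2]
      have hq : qint (2*((k:ℤ)+1)) ≠ 0 := qint_ne_zero _ (by omega)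
      rw [← mul_div_assoc, ← mul_div_assoc]
      rw [div_eq_div_iff (mul_ne_zero (mul_ne_zero (qdfact_ne_zero k) hq) (qdfact_ne_zero _))
        (mul_ne_zero (qdfact_ne_zero k) (qdfact_ne_zero _))]
      have e2 : v^(-(2*((n:ℤ)-((k:ℤ)+1)))) * v^(2*((n:ℤ)-((k:ℤ)+1))*(1-((k:ℤ)+1)))
          = v^(-4*(((n:ℤ)-1)-(k:ℤ))) * v^(2*(((n:ℤ)-1)-(k:ℤ))*(1-(k:ℤ))) := by
        rw [← zp, ← zp]; congr 1; ring
      linear_combination (qint (2*((k:ℤ)+1)) * qdfact k * qdfact (n-1-k)) * e2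
    rw [Finset.sum_congr rfl step]
    have hsym := A_symm (n-1)
    rw [show (n-1)+1 = n by omega] at hsym
    rw [hsym]
    have c2 : ((n-1:ℕ):ℤ) = (n:ℤ)-1 := by omega
    rw [c2, show -2*((n:ℤ)-1) = 2-2*(n:ℤ) by ring]
  rw [h1, h2]
  ring

def cexp (n : ℕ) : ℤ := 2*(n:ℤ) - ((n*(n+1)/2 : ℕ):ℤ)

lemma A_zero : A 0 = 1 := by
  simp [A, At, qdfact_zero]

lemma A_closed (n : ℕ) : qfact n * A n = v ^ (cexp n) := by
  induction n with
  | zero => simp [A_zero, cexp, qfact]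
  | succ m ih =>
    have ha := A_rec (m+1) (by omega)
    rw [Nat.add_sub_cancel] at ha
    push_cast at ha
    have hq1 : qint ((m:ℤ)+1) ≠ 0 := qint_ne_zero _ (by omega)
    have hq2 : qint (2*((m:ℤ)+1)) ≠ 0 := qint_ne_zero _ (by omega)
    have a1 : v^(2-((m:ℤ)+1)) * v^((m:ℤ)+1) = v^(2:ℤ) := by rw [← zp]; congr 1; ring
    have a2 : v^(2-((m:ℤ)+1)) * v^(-((m:ℤ)+1)) = v^(2-2*((m:ℤ)+1)) := by
      rw [← zp]; congr 1; ring
    have hv2 : v^(2-((m:ℤ)+1)) * v^(cexp m) = v^(cexp (m+1)) := by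
      rw [← zp]
      congr 1
      have hT : (m+1)*(m+1+1)/2 = m*(m+1)/2 + (m+1) := by
        have h2 : (m+1)*(m+1+1) = m*(m+1) + (m+1)*2 := by ring
        rw [h2, Nat.add_mul_div_right _ _ (by norm_num)]
      simp only [cexp, hT]
      push_cast
      ring
    have hd := qint_double ((m:ℤ)+1)
    apply mul_right_cancel₀ hq2
    rw [qfact_succ]
    linear_combination (qfact m * qint ((m:ℤ)+1) * ha)
      + (qint ((m:ℤ)+1) * (v^(2:ℤ)+v^(2-2*((m:ℤ)+1))) * ih)
      - (qint ((m:ℤ)+1) * v^(cexp m) * (a1 + a2))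
      - (v^(2-((m:ℤ)+1)) * v^(cexp m) * hd) + hv2 * qint (2*((m:ℤ)+1))

lemma two_T (r : ℕ) : 2*((r*(r+1)/2 : ℕ):ℤ) = (r:ℤ)*((r:ℤ)+1) := by
  have h : (r*(r+1)/2)*2 = r*(r+1) := Nat.div_mul_cancel (Nat.even_mul_succ_self r).two_dvd
  have h2 := congrArg (Nat.cast : ℕ → ℤ) h
  rw [Nat.cast_mul, Nat.cast_mul, Nat.cast_add, Nat.cast_one, Nat.cast_ofNat] at h2
  linarith

lemma tri_reindex (d : ℕ) (f : ℕ → ℕ → K) :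
    ∑ k ∈ Finset.range (d+1), ∑ m ∈ Finset.range (d+1-k), f k m
    = ∑ n ∈ Finset.range (d+1), ∑ k ∈ Finset.range (n+1), f k (n-k) := by
  rw [Finset.sum_sigma' (Finset.range (d+1)) (fun k => Finset.range (d+1-k))
        (fun k m => f k m),
      Finset.sum_sigma' (Finset.range (d+1)) (fun n => Finset.range (n+1))
        (fun n k => f k (n - k))]
  apply Finset.sum_nbij' (i := fun p => (⟨p.1 + p.2, p.1⟩ : Σ _ : ℕ, ℕ))
    (j := fun p => (⟨p.2, p.1 - p.2⟩ : Σ _ : ℕ, ℕ))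
  · intro p hp
    simp only [Finset.mem_sigma, Finset.mem_range] at hp ⊢
    omega
  · intro p hp
    simp only [Finset.mem_sigma, Finset.mem_range] at hp ⊢
    omega
  · intro p hp
    obtain ⟨a, b⟩ := p
    simp only [Finset.mem_sigma, Finset.mem_range] at hp
    simp only [show a + b - a = b from by omega]
  · intro p hp
    obtain ⟨a, b⟩ := p
    simp only [Finset.mem_sigma, Finset.mem_range] at hp
    simp only [show b + (a - b) = a from by omega]
  · intro p hp
    simp only [Finset.mem_sigma, Finset.mem_range] at hp
    simp only []
    congr 1
    omega


theorem stmt2 (d : ℕ) (hd : 1 ≤ d) :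
    ∑ k ∈ Finset.range (d + 1), ∑ m ∈ Finset.range (d + 1 - k),
      (-1 : K) ^ (d - k - m) *
        v ^ ((((d - k - m) * (d - k - m + 1) / 2 : ℕ) : ℤ)
              - 2 * ((k : ℤ) - 1) * (m : ℤ)) /
        (qfact (d - k - m) * qdfact k * qdfact m)
    = 0 := by
  rw [tri_reindex d (fun k m => (-1 : K) ^ (d - k - m) *
        v ^ ((((d - k - m) * (d - k - m + 1) / 2 : ℕ) : ℤ)
              - 2 * ((k : ℤ) - 1) * (m : ℤ)) /
        (qfact (d - k - m) * qdfact k * qdfact m))]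
  have inner : ∀ n ∈ Finset.range (d+1),
      (∑ k ∈ Finset.range (n+1), (-1 : K) ^ (d - k - (n-k)) *
        v ^ ((((d - k - (n-k)) * (d - k - (n-k) + 1) / 2 : ℕ) : ℤ)
              - 2 * ((k : ℤ) - 1) * ((n-k : ℕ) : ℤ)) /
        (qfact (d - k - (n-k)) * qdfact k * qdfact (n-k)))
      = (-1:K)^(d-n) * v ^ ((((d-n) * (d-n+1) / 2 : ℕ) : ℤ) + cexp n) / (qfact (d-n) * qfact n) := by
    intro n hn
    simp only [Finset.mem_range] at hn
    have hstep : ∀ k ∈ Finset.range (n+1),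
        (-1 : K) ^ (d - k - (n-k)) *
          v ^ ((((d - k - (n-k)) * (d - k - (n-k) + 1) / 2 : ℕ) : ℤ)
                - 2 * ((k : ℤ) - 1) * ((n-k : ℕ) : ℤ)) /
          (qfact (d - k - (n-k)) * qdfact k * qdfact (n-k))
        = ((-1:K)^(d-n) * v ^ ((((d-n) * (d-n+1) / 2 : ℕ) : ℤ)) / qfact (d-n)) * At n k := by
      intro k hk
      simp only [Finset.mem_range] at hk
      rw [show d - k - (n-k) = d - n from by omega]
      rw [show ((n-k:ℕ):ℤ) = (n:ℤ)-(k:ℤ) from by omega]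
      rw [show ((((d-n) * (d-n+1) / 2 : ℕ) : ℤ) - 2 * ((k : ℤ) - 1) * ((n:ℤ)-(k:ℤ)))
          = ((((d-n) * (d-n+1) / 2 : ℕ) : ℤ)) + (2*((n:ℤ)-(k:ℤ))*(1-(k:ℤ))) from by ring]
      rw [zp, At]
      ring
    rw [Finset.sum_congr rfl hstep, ← Finset.mul_sum, ← A]
    have hA : A n = v ^ (cexp n) / qfact n := by
      rw [eq_div_iff (qfact_ne_zero n), mul_comm, A_closed]
    rw [hA, zp]
    ring
  rw [Finset.sum_congr rfl inner]
  have final : ∀ n ∈ Finset.range (d+1),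
      (-1:K)^(d-n) * v ^ ((((d-n) * (d-n+1) / 2 : ℕ) : ℤ) + cexp n) / (qfact (d-n) * qfact n)
      = v ^ (cexp d) * ((-1:K)^(d-n) * v ^ (((d-n:ℕ):ℤ) * ((d:ℤ)-1)) / (qfact (d-n) * qfact (d-(d-n)))) := by
    intro n hn
    simp only [Finset.mem_range] at hn
    rw [show d - (d-n) = n from by omega]
    have h2 : (2:ℤ) * ((((d-n) * (d-n+1) / 2 : ℕ) : ℤ) + cexp n)
        = 2 * (((d-n:ℕ):ℤ) * ((d:ℤ)-1) + cexp d) := by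
      have er := two_T (d-n)
      have en := two_T n
      have ed := two_T d
      have hc : ((d-n:ℕ):ℤ) = (d:ℤ)-(n:ℤ) := by omega
      rw [hc] at er ⊢
      simp only [cexp]
      linear_combination er - en + ed
    have hexp : ((((d-n) * (d-n+1) / 2 : ℕ) : ℤ) + cexp n)
        = (((d-n:ℕ):ℤ) * ((d:ℤ)-1) + cexp d) := by
      exact mul_left_cancel₀ two_ne_zero h2
    rw [hexp, zp]
    ring
  rw [Finset.sum_congr rfl final, ← Finset.mul_sum]
  have : ∑ n ∈ Finset.range (d+1),
      ((-1:K)^(d-n) * v ^ (((d-n:ℕ):ℤ) * ((d:ℤ)-1)) / (qfact (d-n) * qfact (d-(d-n)))) = Xsum d := by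
    rw [Xsum, ← Finset.sum_range_reflect
      (fun r => (-1:K)^r * v ^ ((r:ℤ) * ((d:ℤ)-1)) / (qfact r * qfact (d-r))) (d+1)]
    apply Finset.sum_congr rfl
    intro n hn
    simp only [Finset.mem_range] at hn
    rw [show d + 1 - 1 - n = d - n from by omega]
  rw [this, Xsum_eq_zero d hd, mul_zero]
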